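/- Let Z be a standard real Gaussian, α > 0, and s₀ ∈ ℝ with |s₀| ≤ α. Define F^α(x) = max(-α, min(α, x)). Then E[(F^α(s₀ + σZ) - s₀)²] ≤ σ², with strict inequality whenever σ > 0. -/

import Mathlib

open ProbabilityTheory MeasureTheory

open Real Filter Set
open scoped NNReal ENNReal

lemma int_exp_half : ∫ x : ℝ, Real.exp (-x^2/2) = Real.sqrt (2*π) := by
  have := integral_gaussian (1/2)
  simp only [neg_mul] at this
  rw [show Real.sqrt (π/(1/2)) = Real.sqrt (2*π) by norm_num [mul_comm]] at this
  rw [← this]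
  congr 1; ext x; ring_nf

lemma integrable_sq_exp : Integrable (fun x : ℝ => x^2 * Real.exp (-x^2/2)) := by
  have h := integrable_rpow_mul_exp_neg_mul_sq (b := 1/2) (by norm_num) (s := (2:ℝ)) (by norm_num)
  have heq : (fun x : ℝ => x ^ (2:ℝ) * Real.exp (-(1/2) * x ^ 2)) = fun x : ℝ => x^2 * Real.exp (-x^2/2) := by
    ext x
    rw [show ((2:ℝ)) = ((2:ℕ):ℝ) by norm_num, Real.rpow_natCast]
    ring_nf
  rwa [heq] at h

lemma integrable_exp_half : Integrable (fun x : ℝ => Real.exp (-x^2/2)) := by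
  have h := integrable_exp_neg_mul_sq (b := (1/2:ℝ)) (by norm_num)
  have heq : (fun x : ℝ => Real.exp (-(1/2) * x ^ 2)) = fun x : ℝ => Real.exp (-x^2/2) := by
    ext x; ring_nf
  rwa [heq] at h

lemma int_sq_exp_half : ∫ x : ℝ, x^2 * Real.exp (-x^2/2) = Real.sqrt (2*π) := by
  have hderiv : ∀ x : ℝ, HasDerivAt (fun x : ℝ => -x * Real.exp (-x^2/2))
      (x^2 * Real.exp (-x^2/2) - Real.exp (-x^2/2)) x := by
    intro x
    have h1 : HasDerivAt (fun x : ℝ => -x^2/2) (-x) x := by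
      have := ((hasDerivAt_pow 2 x).neg).div_const 2
      simpa using this.congr_deriv (by push_cast; ring)
    have h2 : HasDerivAt (fun x : ℝ => Real.exp (-x^2/2)) (Real.exp (-x^2/2) * (-x)) x := h1.exp
    have h3 : HasDerivAt (fun x : ℝ => -x) (-1) x := (hasDerivAt_id x).neg
    have : HasDerivAt (fun x : ℝ => -x * Real.exp (-x^2/2))
        (-1 * Real.exp (-x^2/2) + -x * (Real.exp (-x^2/2) * -x)) x := h3.mul h2
    convert this using 1
    ring
  have hint : Integrable (fun x : ℝ => x^2 * Real.exp (-x^2/2) - Real.exp (-x^2/2)) :=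
    integrable_sq_exp.sub integrable_exp_half
  have htop0 : Tendsto (fun x : ℝ => x * Real.exp (-x^2/2)) atTop (nhds 0) := by
    have h := rpow_mul_exp_neg_mul_sq_isLittleO_exp_neg (b := 1/2) (by norm_num) 1
    have hexp : Tendsto (fun x : ℝ => Real.exp (-(1/2) * x)) atTop (nhds 0) :=
      Real.tendsto_exp_comp_nhds_zero.mpr
        ((tendsto_const_mul_atBot_of_neg (by norm_num : (-(1/2):ℝ) < 0)).mpr tendsto_id)
    have h2 := h.trans_tendsto hexp
    have heq : (fun x : ℝ => x ^ (1:ℝ) * Real.exp (-(1/2) * x ^ 2)) = fun x : ℝ => x * Real.exp (-x^2/2) := by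
      ext x; rw [Real.rpow_one]; ring_nf
    rwa [heq] at h2
  have htop : Tendsto (fun x : ℝ => -x * Real.exp (-x^2/2)) atTop (nhds 0) := by
    have := htop0.neg
    simpa using this.congr (fun x => by ring)
  have hbot : Tendsto (fun x : ℝ => -x * Real.exp (-x^2/2)) atBot (nhds 0) := by
    have h := htop0.comp tendsto_neg_atBot_atTop
    refine h.congr fun x => ?_
    simp [Function.comp, neg_sq]
  have h0 : ∫ x : ℝ, (x^2 * Real.exp (-x^2/2) - Real.exp (-x^2/2)) = 0 - 0 :=
    integral_of_hasDerivAt_of_tendsto hderiv hint hbot htop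
  rw [integral_sub integrable_sq_exp integrable_exp_half, int_exp_half] at h0
  linarith

lemma pdf01_eq (x : ℝ) : gaussianPDFReal 0 1 x = (Real.sqrt (2*π))⁻¹ * Real.exp (-x^2/2) := by
  simp only [gaussianPDFReal, NNReal.coe_one, mul_one, sub_zero]

noncomputable def pdfN (x : ℝ) : ℝ≥0 := (gaussianPDFReal 0 1 x).toNNReal

lemma pdfN_meas : Measurable pdfN := (measurable_gaussianPDFReal 0 1).real_toNNReal

lemma pdfN_coe (x : ℝ) : (pdfN x : ℝ) = gaussianPDFReal 0 1 x :=
  Real.coe_toNNReal _ (gaussianPDFReal_nonneg 0 1 x)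

lemma gr_eq : gaussianReal 0 1 = volume.withDensity (fun x => (pdfN x : ℝ≥0∞)) := by
  rw [gaussianReal_of_var_ne_zero 0 one_ne_zero]
  congr 1

lemma integral_gaussianReal_eq (g : ℝ → ℝ) :
    ∫ z, g z ∂(gaussianReal 0 1) = ∫ x, gaussianPDFReal 0 1 x * g x := by
  rw [gr_eq, integral_withDensity_eq_integral_smul pdfN_meas g]
  congr 1; ext x
  rw [NNReal.smul_def, smul_eq_mul, pdfN_coe]

lemma integrable_gaussianReal_iff (g : ℝ → ℝ) :
    Integrable g (gaussianReal 0 1) ↔ Integrable (fun x => gaussianPDFReal 0 1 x * g x) := by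
  rw [gr_eq, integrable_withDensity_iff_integrable_smul pdfN_meas]
  constructor <;> intro h <;> refine h.congr (Filter.Eventually.of_forall fun x => ?_) <;>
    simp only [NNReal.smul_def, smul_eq_mul, pdfN_coe]

lemma sqrt_two_pi_pos : 0 < Real.sqrt (2*π) := Real.sqrt_pos.mpr (by positivity)

lemma integrable_sq_gauss : Integrable (fun z : ℝ => z^2) (gaussianReal 0 1) := by
  rw [integrable_gaussianReal_iff]
  have h := integrable_sq_exp.const_mul ((Real.sqrt (2*π))⁻¹)
  refine h.congr (Filter.Eventually.of_forall fun x => ?_)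
  show (Real.sqrt (2*π))⁻¹ * (x^2 * Real.exp (-x^2/2)) = gaussianPDFReal 0 1 x * x^2
  rw [pdf01_eq]; ring

lemma int_sq_gauss : ∫ z, z^2 ∂(gaussianReal 0 1) = 1 := by
  rw [integral_gaussianReal_eq]
  have : ∀ x : ℝ, gaussianPDFReal 0 1 x * x^2 = (Real.sqrt (2*π))⁻¹ * (x^2 * Real.exp (-x^2/2)) := by
    intro x; rw [pdf01_eq]; ring
  simp_rw [this]
  rw [integral_const_mul, int_sq_exp_half, inv_mul_cancel₀ (ne_of_gt sqrt_two_pi_pos)]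

/-- Clipping to a box [-α,α] containing the true signal s₀ reduces MSE relative
to the identity: E[(F^α(s₀+σZ)-s₀)²] ≤ σ², strictly when σ > 0. -/
theorem stmt_6 (α s0 σ : ℝ) (hα : 0 < α) (hs0 : |s0| ≤ α) (hσ : 0 ≤ σ) :
    (∫ z, (max (-α) (min α (s0 + σ * z)) - s0) ^ 2 ∂(gaussianReal 0 1)) ≤ σ ^ 2 ∧
    (0 < σ →
      (∫ z, (max (-α) (min α (s0 + σ * z)) - s0) ^ 2 ∂(gaussianReal 0 1)) < σ ^ 2) := by
  obtain ⟨hs1, hs2⟩ := abs_le.mp hs0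
  set μ := gaussianReal 0 1 with hμ
  set f : ℝ → ℝ := fun z => (max (-α) (min α (s0 + σ * z)) - s0) ^ 2 with hf
  set g : ℝ → ℝ := fun z => σ^2 * z^2 with hg
  have key : ∀ z, f z ≤ g z := by
    intro z
    simp only [hf, hg]
    rcases le_total α (s0 + σ * z) with h | h
    · rw [min_eq_left h, max_eq_right (by linarith)]
      nlinarith [mul_nonneg (by linarith : (0:ℝ) ≤ σ * z - (α - s0))
        (by linarith : (0:ℝ) ≤ σ * z + (α - s0))]
    · rcases le_total (s0 + σ * z) (-α) with h2 | h2
      · rw [min_eq_right h, max_eq_left (by linarith)]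
        nlinarith [mul_nonneg (by linarith : (0:ℝ) ≤ (-α - s0) - σ * z)
          (by linarith : (0:ℝ) ≤ -(σ * z) - (-α - s0))]
      · rw [min_eq_right h, max_eq_right h2]
        nlinarith [sq_nonneg (s0 + σ * z - s0 - σ * z)]
  have hg_int : Integrable g μ := integrable_sq_gauss.const_mul _
  have hg_val : ∫ z, g z ∂μ = σ^2 := by
    simp only [hg, hμ]
    rw [integral_const_mul, int_sq_gauss, mul_one]
  have hf_cont : Continuous f := by fun_prop
  have hf_nonneg : ∀ z, 0 ≤ f z := fun z => sq_nonneg _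
  have hf_int : Integrable f μ := by
    refine hg_int.mono' hf_cont.aestronglyMeasurable
      (Filter.Eventually.of_forall fun z => ?_)
    rw [Real.norm_eq_abs, abs_of_nonneg (hf_nonneg z)]
    exact key z
  have hle : ∫ z, f z ∂μ ≤ σ^2 := by
    rw [← hg_val]
    exact integral_mono hf_int hg_int key
  refine ⟨hle, fun hσp => ?_⟩
  -- strict case
  have hD_int : Integrable (fun z => g z - f z) μ := hg_int.sub hf_int
  have hD_nonneg : ∀ z, 0 ≤ g z - f z := fun z => sub_nonneg.mpr (key z)
  have hpos : 0 < ∫ z, (g z - f z) ∂μ := by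
    rw [integral_pos_iff_support_of_nonneg_ae
      (Filter.Eventually.of_forall hD_nonneg) hD_int]
    have hsub : Set.Ioi ((α - s0)/σ) ⊆ Function.support (fun z => g z - f z) := by
      intro z hz
      have hz' : α - s0 < σ * z := by
        have := (div_lt_iff₀' hσp).mp hz
        linarith [this]
      have hxα : α < s0 + σ * z := by linarith
      have hfz : f z = (α - s0)^2 := by
        simp only [hf]
        rw [min_eq_left hxα.le, max_eq_right (by linarith)]
      have hgz : g z = σ^2 * z^2 := rfl
      have hDpos : 0 < g z - f z := by
        rw [hfz, hgz]
        nlinarith [mul_pos (by linarith : (0:ℝ) < σ * z - (α - s0))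
          (by linarith : (0:ℝ) < σ * z + (α - s0))]
      exact Function.mem_support.mpr hDpos.ne'
    have hATop : μ (Set.Ioi ((α - s0)/σ)) ≠ 0 := by
      intro hz0
      have := (gaussianReal_absolutelyContinuous' 0 one_ne_zero) hz0
      rw [Real.volume_Ioi] at this
      exact ENNReal.top_ne_zero this
    calc (0:ℝ≥0∞) < μ (Set.Ioi ((α - s0)/σ)) := pos_iff_ne_zero.mpr hATop
      _ ≤ μ (Function.support fun z => g z - f z) := measure_mono hsub
  have := integral_sub hg_int hf_int
  rw [this, hg_val] at hpos
  linarith
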